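/- Let S ⊂ V with vol(S) ≤ vol(V∖S) and φ(S) ≤ δ. Then for any ℓ ∈ ℕ there exists a vertex v ∈ S such that ‖W^ℓ(v,·) − π‖₂² > (1/(16 m⁷)) · (1 − 4δ)^{2ℓ}. -/

import Mathlib

open Finset Matrix

/-- The lazy random walk matrix of a graph. -/
noncomputable def lazyWalk {V : Type*} [Fintype V] [DecidableEq V] (G : SimpleGraph V)
    [DecidableRel G.Adj] : Matrix V V ℝ :=
  fun u v => if u = v then 1 / 2 else if G.Adj u v then 1 / (2 * (G.degree v : ℝ)) else 0

/-- The volume of a set of vertices: the sum of their degrees. -/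
def gvol {V : Type*} [Fintype V] [DecidableEq V] (G : SimpleGraph V) [DecidableRel G.Adj]
    (S : Finset V) : ℕ :=
  ∑ v ∈ S, G.degree v

/-- The number of edges crossing from `S` to `T` (for disjoint `S`, `T`). -/
def gcut {V : Type*} [Fintype V] [DecidableEq V] (G : SimpleGraph V) [DecidableRel G.Adj]
    (S T : Finset V) : ℕ :=
  ((S ×ˢ T).filter (fun p => G.Adj p.1 p.2)).card

section Aux

variable {V : Type*} [Fintype V] [DecidableEq V] (G : SimpleGraph V) [DecidableRel G.Adj]

/-- generic Cauchy–Schwarz for a symmetric PSD matrix form -/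
lemma cs_form (P : Matrix V V ℝ)
    (hsym : ∀ x y : V → ℝ, x ⬝ᵥ P.mulVec y = y ⬝ᵥ P.mulVec x)
    (hpsd : ∀ x : V → ℝ, 0 ≤ x ⬝ᵥ P.mulVec x) (x y : V → ℝ) :
    (x ⬝ᵥ P.mulVec y) ^ 2 ≤ (x ⬝ᵥ P.mulVec x) * (y ⬝ᵥ P.mulVec y) := by
  have key : ∀ t : ℝ, 0 ≤ (y ⬝ᵥ P.mulVec y) * (t * t) + (2 * (x ⬝ᵥ P.mulVec y)) * t
      + (x ⬝ᵥ P.mulVec x) := by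
    intro t
    have h0 := hpsd (x + t • y)
    have hexp : (x + t • y) ⬝ᵥ P.mulVec (x + t • y)
        = (y ⬝ᵥ P.mulVec y) * (t * t) + (2 * (x ⬝ᵥ P.mulVec y)) * t + (x ⬝ᵥ P.mulVec x) := by
      rw [Matrix.mulVec_add, Matrix.mulVec_smul]
      rw [add_dotProduct, smul_dotProduct]
      rw [dotProduct_add, dotProduct_add, dotProduct_smul,
        dotProduct_smul]
      have hs := hsym y x
      simp only [smul_eq_mul]
      linear_combination (t : ℝ) * hs
    rw [hexp] at h0
    exact h0
  have hdisc := discrim_le_zero key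
  rw [discrim] at hdisc
  nlinarith [hdisc]

lemma sym_form (P : Matrix V V ℝ) (hP : Pᵀ = P) (x y : V → ℝ) :
    x ⬝ᵥ P.mulVec y = y ⬝ᵥ P.mulVec x := by
  have hv : x ᵥ* P = P *ᵥ x := by
    have := Matrix.vecMul_transpose P x
    rwa [hP] at this
  rw [Matrix.dotProduct_mulVec, hv, dotProduct_comm]

variable (hd : ∀ u : V, 0 < (G.degree u : ℝ))

noncomputable def Dinv : Matrix V V ℝ := Matrix.diagonal (fun u => ((G.degree u : ℝ))⁻¹)

include hd

lemma transpose_W_Dinv : (lazyWalk G)ᵀ * Dinv G = Dinv G * lazyWalk G := by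
  ext u v
  simp only [Dinv, Matrix.mul_diagonal, Matrix.diagonal_mul, Matrix.transpose_apply, lazyWalk]
  by_cases h1 : u = v
  · subst h1; simp [mul_comm]
  · have h1' : ¬ (v = u) := fun h => h1 h.symm
    simp only [h1, h1', if_false]
    by_cases h2 : G.Adj u v
    · have h2' : G.Adj v u := h2.symm
      simp only [h2, h2', if_true]
      have du := (hd u).ne'
      have dv := (hd v).ne'
      field_simp
    · have h2' : ¬ G.Adj v u := fun h => h2 h.symm
      simp [h2, h2']

lemma transpose_Wpow_Dinv : ∀ k : ℕ, ((lazyWalk G) ^ k)ᵀ * Dinv G = Dinv G * (lazyWalk G) ^ k := by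
  intro k
  induction k with
  | zero => simp [Dinv]
  | succ n ih =>
    rw [pow_succ, Matrix.transpose_mul, Matrix.mul_assoc, ih, ← Matrix.mul_assoc,
      transpose_W_Dinv G hd, Matrix.mul_assoc, ← pow_succ', ← pow_succ]

lemma T_symm (k : ℕ) : (Dinv G * (lazyWalk G) ^ k)ᵀ = Dinv G * (lazyWalk G) ^ k := by
  rw [Matrix.transpose_mul, show (Dinv G)ᵀ = Dinv G from Matrix.diagonal_transpose _,
    transpose_Wpow_Dinv G hd]

omit hd

/-- `degvec` is the degree vector. -/
noncomputable def degvec : V → ℝ := fun u => (G.degree u : ℝ)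

lemma W_mulVec_apply (z : V → ℝ) (u : V) :
    (lazyWalk G).mulVec z u = z u / 2 + ∑ v, (if G.Adj u v then z v / (2 * (G.degree v : ℝ)) else 0) := by
  unfold Matrix.mulVec dotProduct lazyWalk
  have h : ∀ v : V, (if u = v then (1:ℝ) / 2 else if G.Adj u v then 1 / (2 * (G.degree v : ℝ)) else 0) * z v
      = (if u = v then z v / 2 else 0) + (if G.Adj u v then z v / (2 * (G.degree v : ℝ)) else 0) := by
    intro v
    by_cases h1 : u = v
    · subst h1; simp [G.loopless.irrefl u]; ring
    · simp only [h1, if_false]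
      by_cases h2 : G.Adj u v
      · simp [h2]; ring
      · simp [h2]
  rw [Finset.sum_congr rfl (fun v _ => h v), Finset.sum_add_distrib, Finset.sum_ite_eq]
  simp

include hd

lemma W_stationary : (lazyWalk G).mulVec (degvec G) = degvec G := by
  funext u
  rw [W_mulVec_apply]
  have h : ∀ v : V, (if G.Adj u v then degvec G v / (2 * (G.degree v : ℝ)) else 0)
      = (if G.Adj u v then (1:ℝ)/2 else 0) := by
    intro v
    by_cases h2 : G.Adj u v
    · simp only [h2, if_true, degvec]
      rw [div_eq_div_iff (by have := hd v; positivity) two_ne_zero]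
      ring
    · simp [h2]
  rw [Finset.sum_congr rfl (fun v _ => h v), Finset.sum_ite, Finset.sum_const,
    Finset.sum_const]
  have hcard : (Finset.univ.filter (fun v => G.Adj u v)).card = G.degree u := by
    rw [← SimpleGraph.neighborFinset_eq_filter]; rfl
  simp only [hcard, smul_eq_mul, mul_zero, add_zero, degvec]
  ring

lemma Wpow_stationary (k : ℕ) : ((lazyWalk G) ^ k).mulVec (degvec G) = degvec G := by
  induction k with
  | zero => simp
  | succ n ih => rw [pow_succ', ← Matrix.mulVec_mulVec, ih, W_stationary G hd]

omit hd

/-- sum over adjacency of a function of the first coordinate. -/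
lemma adj_sum_fst (f : V → ℝ) :
    ∑ u, ∑ v, (if G.Adj u v then f u else 0) = ∑ u, (G.degree u : ℝ) * f u := by
  refine Finset.sum_congr rfl fun u _ => ?_
  rw [Finset.sum_ite, Finset.sum_const, Finset.sum_const]
  have hcard : (Finset.univ.filter (fun v => G.Adj u v)).card = G.degree u := by
    rw [← SimpleGraph.neighborFinset_eq_filter]; rfl
  simp [hcard, mul_comm]

lemma adj_sum_snd (f : V → ℝ) :
    ∑ u, ∑ v, (if G.Adj u v then f v else 0) = ∑ u, (G.degree u : ℝ) * f u := by
  rw [Finset.sum_comm]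
  have h : ∀ v u : V, (if G.Adj u v then f v else 0) = (if G.Adj v u then f v else 0) := by
    intro v u
    by_cases hh : G.Adj u v
    · simp [hh, hh.symm]
    · have h' : ¬ G.Adj v u := fun h2 => hh h2.symm
      simp [hh, h']
  calc ∑ v, ∑ u, (if G.Adj u v then f v else 0)
      = ∑ v, ∑ u, (if G.Adj v u then f v else 0) :=
        Finset.sum_congr rfl fun v _ => Finset.sum_congr rfl fun u _ => h v u
    _ = ∑ u, (G.degree u : ℝ) * f u := adj_sum_fst G f

include hd

/-- quadratic form identity for the lazy walk. -/
lemma quad_form_eq (z : V → ℝ) :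
    z ⬝ᵥ (Dinv G * lazyWalk G).mulVec z
      = (1/4) * ∑ u, ∑ v, (if G.Adj u v then
          (z u * ((G.degree u : ℝ))⁻¹ + z v * ((G.degree v : ℝ))⁻¹) ^ 2 else 0) := by
  set y : V → ℝ := fun u => z u * ((G.degree u : ℝ))⁻¹ with hy
  have lhs_eq : z ⬝ᵥ (Dinv G * lazyWalk G).mulVec z
      = (1/2) * (∑ u, z u * y u) + (1/2) * ∑ u, ∑ v, (if G.Adj u v then y u * y v else 0) := by
    rw [← Matrix.mulVec_mulVec]
    unfold dotProduct
    have h1 : ∀ u : V, z u * ((Dinv G).mulVec ((lazyWalk G).mulVec z)) u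
        = y u * ((lazyWalk G).mulVec z) u := by
      intro u
      simp only [Dinv, Matrix.mulVec_diagonal, hy]
      ring
    rw [Finset.sum_congr rfl (fun u _ => h1 u)]
    have h2 : ∀ u : V, y u * ((lazyWalk G).mulVec z) u
        = (1/2) * (z u * y u) + (1/2) * ∑ v, (if G.Adj u v then y u * y v else 0) := by
      intro u
      rw [W_mulVec_apply]
      rw [mul_add, Finset.mul_sum, Finset.mul_sum]
      congr 1
      · ring
      refine Finset.sum_congr rfl fun v _ => ?_
      by_cases h2 : G.Adj u v
      · simp only [h2, if_true, hy]
        have dv := (hd v).ne'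
        field_simp
      · simp [h2]
    rw [Finset.sum_congr rfl (fun u _ => h2 u), Finset.sum_add_distrib,
      ← Finset.mul_sum, ← Finset.mul_sum]
  have diag_eq : ∑ u, z u * y u = ∑ u, (G.degree u : ℝ) * (y u)^2 := by
    refine Finset.sum_congr rfl fun u _ => ?_
    have du := (hd u).ne'
    simp only [hy]
    field_simp
  have term_eq : ∀ u v : V, (if G.Adj u v then (y u + y v) ^ 2 else 0)
      = (if G.Adj u v then (y u)^2 else 0) + 2 * (if G.Adj u v then y u * y v else 0)
        + (if G.Adj u v then (y v)^2 else 0) := by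
    intro u v
    by_cases h2 : G.Adj u v
    · simp only [h2, if_true]; ring
    · simp [h2]
  have rhs_eq : ∑ u, ∑ v, (if G.Adj u v then (y u + y v) ^ 2 else 0)
      = (∑ u, ∑ v, (if G.Adj u v then (y u)^2 else 0))
        + 2 * (∑ u, ∑ v, (if G.Adj u v then y u * y v else 0))
        + (∑ u, ∑ v, (if G.Adj u v then (y v)^2 else 0)) := by
    simp only [term_eq, Finset.sum_add_distrib, Finset.mul_sum]
  rw [lhs_eq, diag_eq, rhs_eq, adj_sum_fst, adj_sum_snd]
  ring

lemma quad_form_nonneg (z : V → ℝ) : 0 ≤ z ⬝ᵥ (Dinv G * lazyWalk G).mulVec z := by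
  rw [quad_form_eq G hd]
  have h : 0 ≤ ∑ u, ∑ v, (if G.Adj u v then
      (z u * ((G.degree u : ℝ))⁻¹ + z v * ((G.degree v : ℝ))⁻¹) ^ 2 else 0) := by
    refine Finset.sum_nonneg fun u _ => Finset.sum_nonneg fun v _ => ?_
    by_cases h : G.Adj u v
    · simp only [h, if_true]; positivity
    · simp [h]
  linarith

lemma Dinv_form_nonneg (z : V → ℝ) : 0 ≤ z ⬝ᵥ (Dinv G).mulVec z := by
  unfold dotProduct
  refine Finset.sum_nonneg fun u _ => ?_
  simp only [Dinv, Matrix.mulVec_diagonal]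
  have h : z u * (((G.degree u : ℝ))⁻¹ * z u) = ((G.degree u : ℝ))⁻¹ * (z u)^2 := by ring
  rw [h]
  have := (hd u).le
  positivity

/-- shift lemma -/
lemma shift_form (i j k : ℕ) (x y : V → ℝ) :
    (((lazyWalk G) ^ i).mulVec x) ⬝ᵥ (Dinv G * (lazyWalk G) ^ j).mulVec
      (((lazyWalk G) ^ k).mulVec y)
      = x ⬝ᵥ (Dinv G * (lazyWalk G) ^ (i + j + k)).mulVec y := by
  rw [Matrix.mulVec_mulVec, Matrix.mul_assoc, ← pow_add]
  rw [show (((lazyWalk G) ^ i).mulVec x) = x ᵥ* (((lazyWalk G) ^ i)ᵀ) from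
    (Matrix.vecMul_transpose _ _).symm]
  rw [← Matrix.dotProduct_mulVec, Matrix.mulVec_mulVec, ← Matrix.mul_assoc,
    transpose_Wpow_Dinv G hd, Matrix.mul_assoc, ← pow_add, ← add_assoc]

end Aux

/-- power lower bound from log-convexity -/
lemma pow_lower (a : ℕ → ℝ) (c : ℝ) (hc : 0 < c) (h0 : 0 < a 0) (h1 : c * a 0 ≤ a 1)
    (hlc : ∀ k, a (k+1) ^ 2 ≤ a k * a (k+2)) : ∀ k, c ^ k * a 0 ≤ a k := by
  have key : ∀ k, c ^ k * a 0 ≤ a k ∧ c * a k ≤ a (k+1) := by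
    intro k
    induction k with
    | zero => exact ⟨by simp, h1⟩
    | succ n ih =>
      obtain ⟨hn, hs⟩ := ih
      have hanpos : 0 < a n := lt_of_lt_of_le (by positivity) hn
      have han1 : c ^ (n+1) * a 0 ≤ a (n+1) := by
        calc c ^ (n+1) * a 0 = c * (c ^ n * a 0) := by ring
          _ ≤ c * a n := by nlinarith
          _ ≤ a (n+1) := hs
      refine ⟨han1, ?_⟩
      have han1pos : 0 < a (n+1) := lt_of_lt_of_le (by positivity) han1
      have hlcn := hlc n
      nlinarith
  exact fun k => (key k).1

set_option maxHeartbeats 2000000 in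
/-- If `S ⊂ V` has `vol S ≤ vol S̄` and `φ(S) ≤ δ`, then for any `ℓ` there exists `v ∈ S`
with `‖W^ℓ(v,·) − π‖₂² > (1/(16 m⁷)) (1 − 4δ)^{2ℓ}`. -/
theorem stmt7 {V : Type*} [Fintype V] [DecidableEq V] (G : SimpleGraph V) [DecidableRel G.Adj]
    (hconn : G.Connected) (m : ℕ) (hm : m = G.edgeFinset.card) (hm1 : 1 ≤ m)
    (δ : ℝ) (hδ0 : 0 < δ) (hδ : δ < 1 / 4)
    (S : Finset V) (hS : S.Nonempty) (hSproper : S ≠ Finset.univ)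
    (hvol : gvol G S ≤ gvol G Sᶜ)
    (hφ : (gcut G S Sᶜ : ℝ) ≤ δ * (gvol G S : ℝ)) (ℓ : ℕ) :
    ∃ v ∈ S, 1 / (16 * (m : ℝ) ^ 7) * (1 - 4 * δ) ^ (2 * ℓ)
      < ∑ u, ((lazyWalk G ^ ℓ) u v - (G.degree u : ℝ) / (2 * (m : ℝ))) ^ 2 := by
  classical
  obtain ⟨s0, hs0⟩ := hS
  obtain ⟨t0, ht0⟩ : ∃ t, t ∉ S := by
    by_contra hh
    push_neg at hh
    exact hSproper (Finset.eq_univ_iff_forall.mpr hh)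
  have hdeg : ∀ u : V, 0 < G.degree u := by
    intro u
    rw [SimpleGraph.degree_pos_iff_exists_adj]
    have hne : ∃ w : V, u ≠ w := by
      by_cases hu : u ∈ S
      · exact ⟨t0, fun h => ht0 (h ▸ hu)⟩
      · exact ⟨s0, fun h => hu (h ▸ hs0)⟩
    obtain ⟨w, hw⟩ := hne
    obtain ⟨p⟩ := hconn.preconnected u w
    cases p with
    | nil => exact absurd rfl hw
    | cons ha _ => exact ⟨_, ha⟩
  have hd : ∀ u : V, 0 < (G.degree u : ℝ) := fun u => by exact_mod_cast hdeg u
  have hm0 : (0 : ℝ) < m := by exact_mod_cast hm1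
  set W : Matrix V V ℝ := lazyWalk G with hW
  set dv : V → ℝ := degvec G with hdv
  have hdv' : ∀ u, dv u = (G.degree u : ℝ) := fun u => rfl
  set vS : ℝ := (gvol G S : ℝ) with hvS
  set cut : ℝ := (gcut G S Sᶜ : ℝ) with hcut
  have hsumdeg : ∑ u, dv u = 2 * m := by
    have h1 := SimpleGraph.sum_degrees_eq_twice_card_edges G
    calc ∑ u, dv u = ((∑ u, G.degree u : ℕ) : ℝ) := by
          rw [Nat.cast_sum]
          exact Finset.sum_congr rfl fun u _ => hdv' u
      _ = 2 * m := by rw [h1, hm]; push_cast; ring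
  have hvSsum : vS = ∑ u ∈ S, dv u := by
    rw [hvS]
    show ((gvol G S : ℕ) : ℝ) = _
    rw [gvol, Nat.cast_sum]
    exact Finset.sum_congr rfl fun u _ => (hdv' u).symm
  have hsplit : vS + (gvol G Sᶜ : ℝ) = 2 * m := by
    have h2 : (gvol G Sᶜ : ℝ) = ∑ u ∈ Sᶜ, dv u := by
      rw [gvol, Nat.cast_sum]
      exact Finset.sum_congr rfl fun u _ => (hdv' u).symm
    rw [hvSsum, h2, ← hsumdeg, Finset.sum_add_sum_compl]
  have hvolR : vS ≤ (gvol G Sᶜ : ℝ) := by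
    rw [hvS]; exact_mod_cast hvol
  have hvS_le_m : vS ≤ m := by linarith
  have hcard_le : (S.card : ℝ) ≤ vS := by
    rw [hvSsum]
    calc (S.card : ℝ) = ∑ _u ∈ S, (1:ℝ) := by simp
      _ ≤ ∑ u ∈ S, dv u := Finset.sum_le_sum fun u _ => by
          rw [hdv']; exact_mod_cast hdeg u
  have hcard1 : (1 : ℝ) ≤ S.card := by
    have : 0 < S.card := Finset.card_pos.mpr ⟨s0, hs0⟩
    exact_mod_cast this
  have hvS_pos : 0 < vS := lt_of_lt_of_le (by linarith) hcard_le
  set x : V → ℝ := fun u => if u ∈ S then dv u else 0 with hx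
  set α : ℝ := vS / (2 * m) with hα
  set h : V → ℝ := x - α • dv with hh
  have hDinvd : (Dinv G).mulVec dv = fun _ => 1 := by
    funext u
    rw [Dinv, Matrix.mulVec_diagonal, hdv']
    exact inv_mul_cancel₀ (hd u).ne'
  have hxsum : ∑ u, x u = vS := by
    rw [hvSsum, hx]
    simp only
    rw [Finset.sum_ite_mem, Finset.univ_inter]
  have hxDd : x ⬝ᵥ (Dinv G).mulVec dv = vS := by
    rw [hDinvd]
    unfold dotProduct
    simpa using hxsum
  have hdDd : dv ⬝ᵥ (Dinv G).mulVec dv = 2 * m := by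
    rw [hDinvd]
    unfold dotProduct
    simpa using hsumdeg
  have hTd : ∀ k : ℕ, (Dinv G * W ^ k).mulVec dv = (Dinv G).mulVec dv := by
    intro k
    rw [← Matrix.mulVec_mulVec, hW, hdv, Wpow_stationary G hd]
  have hsymT : ∀ (k : ℕ) (z w : V → ℝ), z ⬝ᵥ (Dinv G * W ^ k).mulVec w
      = w ⬝ᵥ (Dinv G * W ^ k).mulVec z := fun k z w => sym_form _ (T_symm G hd k) z w
  have hxTd : ∀ k : ℕ, x ⬝ᵥ (Dinv G * W ^ k).mulVec dv = vS := fun k => by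
    rw [hTd k, hxDd]
  have hdTd : ∀ k : ℕ, dv ⬝ᵥ (Dinv G * W ^ k).mulVec dv = 2 * m := fun k => by
    rw [hTd k, hdDd]
  have ha_form : ∀ k : ℕ, h ⬝ᵥ (Dinv G * W ^ k).mulVec h
      = x ⬝ᵥ (Dinv G * W ^ k).mulVec x - vS ^ 2 / (2 * m) := by
    intro k
    rw [hh, Matrix.mulVec_sub, Matrix.mulVec_smul, sub_dotProduct,
      smul_dotProduct, dotProduct_sub, dotProduct_sub,
      dotProduct_smul, dotProduct_smul]
    rw [hxTd k, hdTd k, hsymT k dv x, hxTd k]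
    simp only [smul_eq_mul, hα]
    field_simp
    ring
  
  -- value of a 0
  have hxDx : x ⬝ᵥ (Dinv G).mulVec x = vS := by
    unfold dotProduct
    have hterm : ∀ u, x u * ((Dinv G).mulVec x) u = if u ∈ S then dv u else 0 := by
      intro u
      simp only [Dinv, Matrix.mulVec_diagonal]
      by_cases hu : u ∈ S
      · simp only [hx, hu, if_true]
        rw [hdv']
        have hne := (hd u).ne'
        field_simp
      · simp [hx, hu]
    rw [Finset.sum_congr rfl fun u _ => hterm u, Finset.sum_ite_mem, Finset.univ_inter,
      ← hvSsum]
  have ha0 : h ⬝ᵥ (Dinv G * W ^ 0).mulVec h = vS - vS ^ 2 / (2 * m) := by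
    rw [ha_form 0, pow_zero, Matrix.mul_one, hxDx]
  -- indicator
  have hχdef : ∀ u, x u * ((G.degree u : ℝ))⁻¹ = if u ∈ S then (1:ℝ) else 0 := by
    intro u
    by_cases hu : u ∈ S
    · simp only [hx, hu, if_true]
      rw [hdv']
      have hne := (hd u).ne'
      field_simp
    · simp [hx, hu]
  -- cut identity
  have hcutid : cut = ∑ u, ∑ v, (if G.Adj u v then
      (if u ∈ S then (1:ℝ) else 0) * (1 - (if v ∈ S then (1:ℝ) else 0)) else 0) := by
    have hterm : ∀ u v, (if G.Adj u v then
        (if u ∈ S then (1:ℝ) else 0) * (1 - (if v ∈ S then (1:ℝ) else 0)) else 0)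
        = (if u ∈ S then (if v ∈ Sᶜ then (if G.Adj u v then (1:ℝ) else 0) else 0) else 0) := by
      intro u v
      by_cases hu : u ∈ S <;> by_cases hv : v ∈ S <;>
        by_cases hadj : G.Adj u v <;>
        simp [hu, hv, hadj, Finset.mem_compl]
    rw [Finset.sum_congr rfl fun u _ => Finset.sum_congr rfl fun v _ => hterm u v]
    have hinner : ∀ u, ∑ v, (if u ∈ S then (if v ∈ Sᶜ then (if G.Adj u v then (1:ℝ) else 0) else 0) else 0)
        = (if u ∈ S then ∑ v ∈ Sᶜ, (if G.Adj u v then (1:ℝ) else 0) else 0) := by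
      intro u
      by_cases hu : u ∈ S
      · simp only [hu, if_true]
        rw [Finset.sum_ite_mem, Finset.univ_inter]
      · simp [hu]
    rw [Finset.sum_congr rfl fun u _ => hinner u, Finset.sum_ite_mem, Finset.univ_inter]
    rw [hcut, gcut, Finset.card_filter]
    push_cast
    rw [Finset.sum_product]
  -- value of a 1
  have ha1 : h ⬝ᵥ (Dinv G * W ^ 1).mulVec h = vS - cut / 2 - vS ^ 2 / (2 * m) := by
    rw [ha_form 1, pow_one]
    have hq := quad_form_eq G hd x
    rw [← hW] at hq
    rw [hq]
    simp only [hχdef]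
    have hterm : ∀ u v : V, (if G.Adj u v then
        ((if u ∈ S then (1:ℝ) else 0) + (if v ∈ S then (1:ℝ) else 0)) ^ 2 else 0)
        = (if G.Adj u v then (if u ∈ S then (1:ℝ) else 0) else 0)
          + (if G.Adj u v then (if v ∈ S then (1:ℝ) else 0) else 0)
          + 2 * ((if G.Adj u v then (if u ∈ S then (1:ℝ) else 0) * (if v ∈ S then (1:ℝ) else 0) else 0)) := by
      intro u v
      by_cases hu : u ∈ S <;> by_cases hv : v ∈ S <;> by_cases hadj : G.Adj u v <;>
        simp [hu, hv, hadj] <;> norm_num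
    have hA : ∑ u, ∑ v, (if G.Adj u v then (if u ∈ S then (1:ℝ) else 0) else 0) = vS := by
      rw [adj_sum_fst G (fun u => if u ∈ S then (1:ℝ) else 0)]
      have : ∀ u, (G.degree u : ℝ) * (if u ∈ S then (1:ℝ) else 0) = if u ∈ S then dv u else 0 := by
        intro u
        by_cases hu : u ∈ S <;> simp [hu, hdv']
      rw [Finset.sum_congr rfl fun u _ => this u, Finset.sum_ite_mem, Finset.univ_inter, ← hvSsum]
    have hB : ∑ u, ∑ v, (if G.Adj u v then (if v ∈ S then (1:ℝ) else 0) else 0) = vS := by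
      rw [adj_sum_snd G (fun u => if u ∈ S then (1:ℝ) else 0)]
      have : ∀ u, (G.degree u : ℝ) * (if u ∈ S then (1:ℝ) else 0) = if u ∈ S then dv u else 0 := by
        intro u
        by_cases hu : u ∈ S <;> simp [hu, hdv']
      rw [Finset.sum_congr rfl fun u _ => this u, Finset.sum_ite_mem, Finset.univ_inter, ← hvSsum]
    have hC : ∑ u, ∑ v, (if G.Adj u v then
        (if u ∈ S then (1:ℝ) else 0) * (if v ∈ S then (1:ℝ) else 0) else 0) = vS - cut := by
      have hsplit2 : ∀ u v : V, (if G.Adj u v then (if u ∈ S then (1:ℝ) else 0) else 0)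
          = (if G.Adj u v then (if u ∈ S then (1:ℝ) else 0) * (if v ∈ S then (1:ℝ) else 0) else 0)
            + (if G.Adj u v then (if u ∈ S then (1:ℝ) else 0) * (1 - (if v ∈ S then (1:ℝ) else 0)) else 0) := by
        intro u v
        by_cases hadj : G.Adj u v <;> by_cases hu : u ∈ S <;> by_cases hv : v ∈ S <;>
          simp [hadj, hu, hv]
      have := hA
      rw [Finset.sum_congr rfl fun u _ => Finset.sum_congr rfl fun v _ => hsplit2 u v] at this
      simp only [Finset.sum_add_distrib] at this
      rw [← hcutid] at this
      linarith
    rw [Finset.sum_congr rfl fun u _ => Finset.sum_congr rfl fun v _ => hterm u v]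
    simp only [Finset.sum_add_distrib, ← Finset.mul_sum]
    rw [hA, hB, hC]
    ring
  -- value of a ℓ
  have haL : h ⬝ᵥ (Dinv G * W ^ ℓ).mulVec h
      = ∑ v ∈ S, dv v * ((∑ u ∈ S, (W ^ ℓ) u v) - vS / (2 * m)) := by
    rw [ha_form ℓ]
    have hX : x ⬝ᵥ (Dinv G * W ^ ℓ).mulVec x
        = ∑ v ∈ S, dv v * (∑ u ∈ S, (W ^ ℓ) u v) := by
      rw [← Matrix.mulVec_mulVec]
      unfold dotProduct
      have hterm : ∀ u, x u * ((Dinv G).mulVec ((W ^ ℓ).mulVec x)) u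
          = if u ∈ S then ((W ^ ℓ).mulVec x) u else 0 := by
        intro u
        simp only [Dinv, Matrix.mulVec_diagonal]
        by_cases hu : u ∈ S
        · simp only [hx, hu, if_true]
          rw [hdv']
          have hne := (hd u).ne'
          field_simp
        · simp [hx, hu]
      rw [Finset.sum_congr rfl fun u _ => hterm u, Finset.sum_ite_mem, Finset.univ_inter]
      have hinner : ∀ u, ((W ^ ℓ).mulVec x) u = ∑ v ∈ S, (W ^ ℓ) u v * dv v := by
        intro u
        unfold Matrix.mulVec dotProduct
        have : ∀ v, (W ^ ℓ) u v * x v = if v ∈ S then (W ^ ℓ) u v * dv v else 0 := by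
          intro v
          by_cases hv : v ∈ S <;> simp [hx, hv]
        rw [Finset.sum_congr rfl fun v _ => this v, Finset.sum_ite_mem, Finset.univ_inter]
      rw [Finset.sum_congr rfl fun u _ => hinner u, Finset.sum_comm]
      refine Finset.sum_congr rfl fun v _ => ?_
      rw [Finset.mul_sum]
      refine Finset.sum_congr rfl fun u _ => by ring
    rw [hX]
    simp only [mul_sub]
    rw [Finset.sum_sub_distrib, ← Finset.sum_mul, ← hvSsum]
    have : vS * (vS / (2 * m)) = vS ^ 2 / (2 * m) := by ring
    rw [this]
  -- log-convexity
  have hlc : ∀ k : ℕ, (h ⬝ᵥ (Dinv G * W ^ (k+1)).mulVec h) ^ 2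
      ≤ (h ⬝ᵥ (Dinv G * W ^ k).mulVec h) * (h ⬝ᵥ (Dinv G * W ^ (k+2)).mulVec h) := by
    intro k
    rcases Nat.even_or_odd k with ⟨j, hj⟩ | ⟨j, hj⟩
    · subst hj
      have e0 := shift_form G hd j 0 j h h
      have e1 := shift_form G hd j 0 (j+1) h h
      have e2 := shift_form G hd (j+1) 0 (j+1) h h
      rw [← hW] at e0 e1 e2
      rw [show j + 0 + j = j + j from by omega] at e0
      rw [show j + 0 + (j+1) = j + j + 1 from by omega] at e1
      rw [show j + 1 + 0 + (j+1) = j + j + 2 from by omega] at e2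
      simp only [pow_zero, Matrix.mul_one] at e0 e1 e2
      have cs := cs_form (Dinv G)
        (fun z w => sym_form _ (Matrix.diagonal_transpose _) z w)
        (Dinv_form_nonneg G hd) ((W ^ j).mulVec h) ((W ^ (j+1)).mulVec h)
      rw [e0, e1, e2] at cs
      exact cs
    · subst hj
      have e0 := shift_form G hd j 1 j h h
      have e1 := shift_form G hd j 1 (j+1) h h
      have e2 := shift_form G hd (j+1) 1 (j+1) h h
      rw [← hW] at e0 e1 e2
      rw [show j + 1 + j = 2*j + 1 from by omega] at e0
      rw [show j + 1 + (j+1) = 2*j + 1 + 1 from by omega] at e1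
      rw [show j + 1 + 1 + (j+1) = 2*j + 1 + 2 from by omega] at e2
      have hsymW : ∀ z w : V → ℝ, z ⬝ᵥ (Dinv G * W).mulVec w = w ⬝ᵥ (Dinv G * W).mulVec z := by
        intro z w
        have := T_symm G hd 1
        rw [pow_one, ← hW] at this
        exact sym_form _ this z w
      have hpsdW : ∀ z : V → ℝ, 0 ≤ z ⬝ᵥ (Dinv G * W).mulVec z := by
        intro z
        have := quad_form_nonneg G hd z
        rwa [← hW] at this
      have cs := cs_form (Dinv G * W) hsymW hpsdW ((W ^ j).mulVec h) ((W ^ (j+1)).mulVec h)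
      rw [show Dinv G * W = Dinv G * W ^ 1 from by rw [pow_one]] at cs
      rw [e0, e1, e2] at cs
      exact cs
  -- apply the power lower bound
  set c : ℝ := 1 - 4 * δ with hc_def
  have hc : 0 < c := by rw [hc_def]; linarith
  have ha0_ge : vS / 2 ≤ h ⬝ᵥ (Dinv G * W ^ 0).mulVec h := by
    rw [ha0]
    have : vS ^ 2 / (2 * m) ≤ vS / 2 := by
      rw [div_le_div_iff₀ (by positivity) (by norm_num)]
      nlinarith
    linarith
  have h0pos : 0 < h ⬝ᵥ (Dinv G * W ^ 0).mulVec h := lt_of_lt_of_le (by linarith) ha0_ge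
  have h1ineq : c * (h ⬝ᵥ (Dinv G * W ^ 0).mulVec h) ≤ h ⬝ᵥ (Dinv G * W ^ 1).mulVec h := by
    rw [ha0, ha1, hc_def]
    have hA0 : vS / 2 ≤ vS - vS ^ 2 / (2*m) := by rw [← ha0]; exact ha0_ge
    nlinarith [hφ]
  have key := pow_lower (fun k => h ⬝ᵥ (Dinv G * W ^ k).mulVec h) c hc h0pos h1ineq hlc ℓ
  have keyL : c ^ ℓ * (vS / 2) ≤ h ⬝ᵥ (Dinv G * W ^ ℓ).mulVec h := by
    calc c ^ ℓ * (vS / 2) ≤ c ^ ℓ * (h ⬝ᵥ (Dinv G * W ^ 0).mulVec h) := by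
          have := pow_pos hc ℓ
          nlinarith
      _ ≤ h ⬝ᵥ (Dinv G * W ^ ℓ).mulVec h := key
  -- find the vertex
  have hexists : ∃ v ∈ S, dv v * (c ^ ℓ / 2) ≤ dv v * ((∑ u ∈ S, (W ^ ℓ) u v) - vS / (2 * m)) := by
    apply Finset.exists_le_of_sum_le ⟨s0, hs0⟩
    rw [← Finset.sum_mul, ← hvSsum, ← haL]
    calc vS * (c ^ ℓ / 2) = c ^ ℓ * (vS / 2) := by ring
      _ ≤ _ := keyL
  obtain ⟨v, hvmem, hvineq⟩ := hexists
  refine ⟨v, hvmem, ?_⟩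
  have hdvpos : 0 < dv v := by rw [hdv']; exact hd v
  have hev : c ^ ℓ / 2 ≤ (∑ u ∈ S, (W ^ ℓ) u v) - vS / (2 * m) :=
    (mul_le_mul_iff_right₀ hdvpos).mp hvineq
  set q : V → ℝ := fun u => (W ^ ℓ) u v - (G.degree u : ℝ) / (2 * m) with hq_def
  have hsub : ∑ u ∈ S, q u = (∑ u ∈ S, (W ^ ℓ) u v) - vS / (2 * m) := by
    rw [hq_def]
    rw [Finset.sum_sub_distrib]
    congr 1
    rw [hvSsum, Finset.sum_div]
    exact Finset.sum_congr rfl fun u _ => by rw [hdv']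
  have hcs := Finset.sum_mul_sq_le_sq_mul_sq S (fun _ => 1) q
  simp only [one_pow, one_mul, Finset.sum_const, nsmul_eq_mul, mul_one] at hcs
  have hq2' : ∑ u ∈ S, q u ^ 2 ≤ ∑ u, q u ^ 2 :=
    Finset.sum_le_univ_sum_of_nonneg fun u => sq_nonneg _
  have hlow : (c ^ ℓ / 2) ^ 2 ≤ (∑ u ∈ S, q u) ^ 2 := by
    rw [hsub]
    exact pow_le_pow_left₀ (by positivity) hev 2
  have hKT : (c ^ ℓ / 2) ^ 2 ≤ (S.card : ℝ) * ∑ u, q u ^ 2 := by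
    calc (c ^ ℓ / 2) ^ 2 ≤ (∑ u ∈ S, q u) ^ 2 := hlow
      _ ≤ (S.card : ℝ) * ∑ u ∈ S, q u ^ 2 := hcs
      _ ≤ (S.card : ℝ) * ∑ u, q u ^ 2 := by
          have h0 : (0:ℝ) ≤ S.card := by positivity
          nlinarith [hq2']
  have hC2 : c ^ (2 * ℓ) = (c ^ ℓ) ^ 2 := by rw [mul_comm, pow_mul]
  have hm1' : (1:ℝ) ≤ m := by exact_mod_cast hm1
  have hm7 : (m : ℝ) ≤ (m : ℝ) ^ 7 := le_self_pow₀ (by linarith) (by norm_num)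
  have hTnn : 0 ≤ ∑ u, q u ^ 2 := Finset.sum_nonneg fun u _ => sq_nonneg _
  have hcl : 0 < c ^ ℓ := pow_pos hc ℓ
  show 1 / (16 * (m:ℝ) ^ 7) * c ^ (2 * ℓ) < ∑ u, q u ^ 2
  rw [hC2]
  have hKpos : (0:ℝ) < S.card := by linarith [hcard1]
  have hK7 : (S.card : ℝ) ≤ (m:ℝ)^7 := le_trans (le_trans hcard_le hvS_le_m) hm7
  have hm7pos : (0:ℝ) < (m:ℝ)^7 := by positivity
  have hsq : (c ^ ℓ) ^ 2 ≤ (∑ u, q u ^ 2) * (4 * (S.card : ℝ)) := by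
    calc (c ^ ℓ) ^ 2 = 4 * ((c ^ ℓ / 2) ^ 2) := by ring
      _ ≤ 4 * ((S.card : ℝ) * ∑ u, q u ^ 2) :=
          mul_le_mul_of_nonneg_left hKT (by norm_num)
      _ = (∑ u, q u ^ 2) * (4 * (S.card : ℝ)) := by ring
  have step1 : 1/(16*(m:ℝ)^7) * (c ^ ℓ) ^ 2 < 1/(4*(S.card:ℝ)) * (c ^ ℓ) ^ 2 := by
    apply mul_lt_mul_of_pos_right _ (pow_pos hcl 2)
    rw [one_div, one_div]
    apply inv_strictAnti₀ (by positivity)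
    linarith
  have step2 : 1/(4*(S.card:ℝ)) * (c ^ ℓ) ^ 2 ≤ ∑ u, q u ^ 2 := by
    rw [div_mul_eq_mul_div, one_mul, div_le_iff₀ (by positivity)]
    linarith [hsq]
  linarith [step1, step2]
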